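/- If A = [[a,b],[c,d]] is a Vahlen matrix, then ã a, b̃ b, c̃ c, d̃ d are all real scalars (where ~ is the reversal). Consequently, for any x ∈ V, the quantity (x c~ + d~)(cx + d) is a real scalar. -/

import Mathlib

open CliffordAlgebra

noncomputable def negQhat {V : Type*} [AddCommGroup V] [Module ℝ V]
    (Q : QuadraticForm ℝ V) : QuadraticForm ℝ (V × ℝ × ℝ) :=
  QuadraticMap.prod (-Q) (QuadraticMap.prod QuadraticMap.sq (-QuadraticMap.sq))

/-- The Clifford map `j : V ⊕ ℝ^{1,1} → Mat₂(Cl(V))` (convention `v² = -Q v`). -/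
noncomputable def jmat {V : Type*} [AddCommGroup V] [Module ℝ V]
    (Q : QuadraticForm ℝ V) (x : V × ℝ × ℝ) :
    Matrix (Fin 2) (Fin 2) (CliffordAlgebra (-Q)) :=
  !![ι (-Q) x.1, algebraMap ℝ _ (x.2.1 - x.2.2);
     algebraMap ℝ _ (x.2.1 + x.2.2), -ι (-Q) x.1]

/-- A Vahlen matrix: an element of `Mat₂(Cl(V))` corresponding, under the
`(1,1)`-periodicity isomorphism `F`, to an element of the Lipschitz group
`Γ(V ⊕ ℝ^{1,1})`, i.e. an invertible `g` with `g x ĝ⁻¹ ∈ V ⊕ ℝ^{1,1}` for all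
`x ∈ V ⊕ ℝ^{1,1}`. -/
def IsVahlen {V : Type*} [AddCommGroup V] [Module ℝ V] (Q : QuadraticForm ℝ V)
    (F : CliffordAlgebra (negQhat Q) ≃ₐ[ℝ] Matrix (Fin 2) (Fin 2) (CliffordAlgebra (-Q)))
    (A : Matrix (Fin 2) (Fin 2) (CliffordAlgebra (-Q))) : Prop :=
  IsUnit (F.symm A) ∧ ∀ x : V × ℝ × ℝ, ∃ y : V × ℝ × ℝ,
    F.symm A * ι (negQhat Q) x * Ring.inverse (involute (F.symm A)) = ι (negQhat Q) y

/-- The pseudo-determinant `Δ([[a,b],[c,d]]) = a d~ - b c~`. -/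
noncomputable def pdet {V : Type*} [AddCommGroup V] [Module ℝ V] (Q : QuadraticForm ℝ V)
    (A : Matrix (Fin 2) (Fin 2) (CliffordAlgebra (-Q))) : CliffordAlgebra (-Q) :=
  A 0 0 * reverse (A 1 1) - A 0 1 * reverse (A 1 0)

namespace VahlenAux

variable {M : Type*} [AddCommGroup M] [Module ℝ M] {Q : QuadraticForm ℝ M}

/-- products of vectors from `s` -/
def genSet (Q : QuadraticForm ℝ M) (s : Set M) : Set (CliffordAlgebra Q) :=
  {z | ∃ l : List M, (∀ m ∈ l, m ∈ s) ∧ z = (l.map (ι Q)).prod}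

/-- span of products of vectors from `s` -/
def SP (Q : QuadraticForm ℝ M) (s : Set M) : Submodule ℝ (CliffordAlgebra Q) :=
  Submodule.span ℝ (genSet Q s)

theorem one_mem_genSet (s : Set M) : (1 : CliffordAlgebra Q) ∈ genSet Q s :=
  ⟨[], by simp, by simp⟩

theorem one_mem_SP (s : Set M) : (1 : CliffordAlgebra Q) ∈ SP Q s :=
  Submodule.subset_span (one_mem_genSet s)

theorem algebraMap_mem_SP (s : Set M) (r : ℝ) :
    algebraMap ℝ (CliffordAlgebra Q) r ∈ SP Q s := by
  rw [Algebra.algebraMap_eq_smul_one]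
  exact Submodule.smul_mem _ _ (one_mem_SP s)

theorem ι_mem_SP {s : Set M} {m : M} (hm : m ∈ s) : ι Q m ∈ SP Q s :=
  Submodule.subset_span ⟨[m], by simpa using hm, by simp⟩

theorem genSet_mul {s : Set M} {x y : CliffordAlgebra Q}
    (hx : x ∈ genSet Q s) (hy : y ∈ genSet Q s) : x * y ∈ genSet Q s := by
  obtain ⟨l1, h1, rfl⟩ := hx
  obtain ⟨l2, h2, rfl⟩ := hy
  refine ⟨l1 ++ l2, ?_, by simp [List.prod_append]⟩
  simp only [List.mem_append]
  rintro m (h | h)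
  exacts [h1 m h, h2 m h]

theorem mul_mem_SP {s : Set M} {x y : CliffordAlgebra Q}
    (hx : x ∈ SP Q s) (hy : y ∈ SP Q s) : x * y ∈ SP Q s := by
  induction hx using Submodule.span_induction with
  | mem a ha =>
    induction hy using Submodule.span_induction with
    | mem b hb => exact Submodule.subset_span (genSet_mul ha hb)
    | zero => simpa using Submodule.zero_mem _
    | add b c _ _ hb hc => rw [mul_add]; exact Submodule.add_mem _ hb hc
    | smul r b _ hb => rw [mul_smul_comm]; exact Submodule.smul_mem _ _ hb
  | zero => simpa using Submodule.zero_mem _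
  | add a b _ _ ha hb => rw [add_mul]; exact Submodule.add_mem _ ha hb
  | smul r a _ ha => rw [smul_mul_assoc]; exact Submodule.smul_mem _ _ ha

theorem SP_mono {s t : Set M} (h : s ⊆ t) : SP Q s ≤ SP Q t := by
  apply Submodule.span_mono
  rintro z ⟨l, hl, rfl⟩
  exact ⟨l, fun m hm => h (hl m hm), rfl⟩

/-- every element lies in the span of products over some finite list of vectors -/
theorem exists_list_SP (z : CliffordAlgebra Q) : ∃ l : List M, z ∈ SP Q {m | m ∈ l} := by
  induction z using CliffordAlgebra.induction with
  | algebraMap r => exact ⟨[], algebraMap_mem_SP _ r⟩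
  | ι m => exact ⟨[m], ι_mem_SP (by simp)⟩
  | mul x y hx hy =>
    obtain ⟨l1, h1⟩ := hx
    obtain ⟨l2, h2⟩ := hy
    refine ⟨l1 ++ l2, mul_mem_SP (SP_mono ?_ h1) (SP_mono ?_ h2)⟩ <;>
      · intro m hm; simp only [Set.mem_setOf_eq, List.mem_append] at *; tauto
  | add x y hx hy =>
    obtain ⟨l1, h1⟩ := hx
    obtain ⟨l2, h2⟩ := hy
    refine ⟨l1 ++ l2, Submodule.add_mem _ (SP_mono ?_ h1) (SP_mono ?_ h2)⟩ <;>
      · intro m hm; simp only [Set.mem_setOf_eq, List.mem_append] at *; tauto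

/-- contraction only depends on the values of the functional on `s` -/
theorem contract_eqOn {s : Set M} {f g : Module.Dual ℝ M}
    (hfg : ∀ m ∈ s, f m = g m) {z : CliffordAlgebra Q} (hz : z ∈ SP Q s) :
    contractLeft (Q := Q) f z = contractLeft g z := by
  induction hz using Submodule.span_induction with
  | mem a ha =>
    obtain ⟨l, hl, rfl⟩ := ha
    induction l with
    | nil => simp [contractLeft_one]
    | cons m t ih =>
      simp only [List.map_cons, List.prod_cons]
      rw [contractLeft_ι_mul, contractLeft_ι_mul, hfg m (hl m (by simp)),
        ih (fun x hx => hl x (by simp [hx]))]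
  | zero => simp
  | add a b _ _ ha hb => simp [ha, hb]
  | smul r a _ ha => simp [ha]

theorem contract_eq_zero {s : Set M} {f : Module.Dual ℝ M}
    (hf : ∀ m ∈ s, f m = 0) {z : CliffordAlgebra Q} (hz : z ∈ SP Q s) :
    contractLeft (Q := Q) f z = 0 := by
  rw [contract_eqOn (g := 0) (fun m hm => by simpa using hf m hm) hz]
  simp

/-- multiplying by a vector from the span of `s` keeps us in `SP s` -/
theorem ι_span_mul_mem {s : Set M} {w : M} (hw : w ∈ Submodule.span ℝ s)
    {q : CliffordAlgebra Q} (hq : q ∈ SP Q s) : ι Q w * q ∈ SP Q s := by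
  induction hw using Submodule.span_induction with
  | mem a ha => exact mul_mem_SP (ι_mem_SP ha) hq
  | zero => simp [Submodule.zero_mem]
  | add a b _ _ ha hb => rw [map_add, add_mul]; exact Submodule.add_mem _ ha hb
  | smul r a _ ha => rw [map_smul, smul_mul_assoc]; exact Submodule.smul_mem _ _ ha

/-- structure lemma: peeling off a generator -/
theorem SP_insert {s : Set M} {e : M} {z : CliffordAlgebra Q}
    (hz : z ∈ SP Q (insert e s)) :
    ∃ p ∈ SP Q s, ∃ q ∈ SP Q s, z = p + ι Q e * q := by
  induction hz using Submodule.span_induction with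
  | mem a ha =>
    obtain ⟨l, hl, rfl⟩ := ha
    induction l with
    | nil => exact ⟨1, one_mem_SP s, 0, Submodule.zero_mem _, by simp⟩
    | cons m t ih =>
      obtain ⟨p, hp, q, hq, hpq⟩ := ih (fun x hx => hl x (by simp [hx]))
      simp only [List.map_cons, List.prod_cons, hpq]
      rcases hl m (by simp) with hm | hm
      · -- m = e
        subst hm
        refine ⟨(Q m) • q, Submodule.smul_mem _ _ hq, p, hp, ?_⟩
        rw [mul_add, ← mul_assoc, ι_sq_scalar, Algebra.smul_def]
        abel
      · -- m ∈ s
        refine ⟨ι Q m * p + (QuadraticMap.polar Q m e) • q,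
          Submodule.add_mem _ (mul_mem_SP (ι_mem_SP hm) hp) (Submodule.smul_mem _ _ hq),
          -(ι Q m * q), Submodule.neg_mem _ (mul_mem_SP (ι_mem_SP hm) hq), ?_⟩
        have hswap : ι Q m * ι Q e =
            algebraMap ℝ _ (QuadraticMap.polar Q m e) - ι Q e * ι Q m :=
          eq_sub_of_add_eq (ι_mul_ι_add_swap m e)
        rw [mul_add, ← mul_assoc, hswap, Algebra.smul_def]
        noncomm_ring
  | zero => exact ⟨0, Submodule.zero_mem _, 0, Submodule.zero_mem _, by simp⟩
  | add a b _ _ ha hb =>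
    obtain ⟨p1, hp1, q1, hq1, rfl⟩ := ha
    obtain ⟨p2, hp2, q2, hq2, rfl⟩ := hb
    exact ⟨p1 + p2, Submodule.add_mem _ hp1 hp2, q1 + q2, Submodule.add_mem _ hq1 hq2, by rw [mul_add]; abel⟩
  | smul r a _ ha =>
    obtain ⟨p, hp, q, hq, rfl⟩ := ha
    exact ⟨r • p, Submodule.smul_mem _ _ hp, r • q, Submodule.smul_mem _ _ hq, by
      rw [smul_add, mul_smul_comm]⟩


/-- The key identity: `ι v * x - involute x * ι v` is contraction by the polar functional. -/
theorem ι_mul_sub_involute_mul_ι (v : M) (x : CliffordAlgebra Q) :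
    ι Q v * x - involute x * ι Q v =
      contractLeft (Q := Q) ((QuadraticMap.polarBilin Q) v) x := by
  induction x using CliffordAlgebra.left_induction with
  | algebraMap r => simp [Algebra.commutes]
  | add x y hx hy =>
    rw [map_add, map_add, mul_add, add_mul, ← hx, ← hy]; abel
  | ι_mul x m hx =>
    rw [contractLeft_ι_mul, ← hx]
    have hswap : ι Q v * ι Q m =
        algebraMap ℝ _ (QuadraticMap.polar Q v m) - ι Q m * ι Q v :=
      eq_sub_of_add_eq (ι_mul_ι_add_swap v m)
    rw [map_mul, involute_ι, ← mul_assoc, hswap, QuadraticMap.polarBilin_apply_apply,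
      Algebra.smul_def]
    noncomm_ring

/-- nondegeneracy: polar functionals realize arbitrary functionals on finitely many vectors -/
theorem exists_polar_eqOn
    (hnd : ∀ w : M, (∀ u : M, QuadraticMap.polar Q w u = 0) → w = 0)
    (l : List M) (f : Module.Dual ℝ M) :
    ∃ v : M, ∀ m ∈ l, QuadraticMap.polar Q v m = f m := by
  classical
  set U : Submodule ℝ M := Submodule.span ℝ {m : M | m ∈ l} with hU
  haveI : FiniteDimensional ℝ U := by
    apply FiniteDimensional.span_of_finite
    exact l.finite_toSet
  set T : M →ₗ[ℝ] Module.Dual ℝ U := (QuadraticMap.polarBilin Q).compl₂ U.subtype with hT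
  have hKtop : LinearMap.range T = ⊤ := by
    by_contra hK
    have hne : (LinearMap.range T).dualCoannihilator ≠ ⊥ := by
      intro hb
      apply hK
      apply Submodule.eq_top_of_finrank_eq
      have h1 := Subspace.finrank_add_finrank_dualCoannihilator_eq (LinearMap.range T)
      rw [hb, finrank_bot, add_zero] at h1
      rw [h1, Subspace.dual_finrank_eq]
    obtain ⟨u, hu, hune⟩ := Submodule.exists_mem_ne_zero_of_ne_bot hne
    have : (u : M) = 0 := by
      apply hnd
      intro w
      rw [QuadraticMap.polar_comm]
      have := (Submodule.mem_dualCoannihilator _).mp hu (T w) ⟨w, rfl⟩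
      simpa [hT, QuadraticMap.polarBilin_apply_apply] using this
    exact hune (Subtype.ext this)
  have hmem : f.comp U.subtype ∈ LinearMap.range T := hKtop ▸ Submodule.mem_top
  obtain ⟨v, hv⟩ := hmem
  refine ⟨v, fun m hm => ?_⟩
  have hmU : m ∈ U := Submodule.subset_span (by simpa using hm)
  have := congrArg (fun φ => φ ⟨m, hmU⟩) hv
  simpa [hT, QuadraticMap.polarBilin_apply_apply] using this

/-- a functional vanishing on a submodule and equal to 1 on a point outside -/
theorem exists_dual_of_not_mem {W : Submodule ℝ M} {v : M} (hv : v ∉ W) :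
    ∃ f : Module.Dual ℝ M, (∀ w ∈ W, f w = 0) ∧ f v = 1 := by
  have h0 : W.mkQ v ≠ 0 := by
    rw [Submodule.mkQ_apply]
    simpa [Submodule.Quotient.mk_eq_zero] using hv
  have h1 : ¬ ∀ φ : Module.Dual ℝ (M ⧸ W), φ (W.mkQ v) = 0 := by
    rw [Module.forall_dual_apply_eq_zero_iff]; exact h0
  push_neg at h1
  obtain ⟨φ, hφ⟩ := h1
  refine ⟨(φ (W.mkQ v))⁻¹ • (φ.comp W.mkQ), fun w hw => ?_, ?_⟩
  · have : W.mkQ w = 0 := by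
      rw [Submodule.mkQ_apply]
      exact (Submodule.Quotient.mk_eq_zero W).2 hw
    simp [this]
  · simp only [LinearMap.smul_apply, LinearMap.comp_apply, smul_eq_mul, Submodule.mkQ_apply]
    exact inv_mul_cancel₀ hφ

/-- MAIN central lemma: a "twisted-central" element is a scalar. -/
theorem scalar_of_alphaCentral [Nontrivial (CliffordAlgebra Q)]
    (hnd : ∀ w : M, (∀ u : M, QuadraticMap.polar Q w u = 0) → w = 0)
    {z : CliffordAlgebra Q} (hz : ∀ v, z * ι Q v = ι Q v * involute z) :
    ∃ r : ℝ, z = algebraMap ℝ _ r := by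
  have hpol : ∀ v, contractLeft (Q := Q) ((QuadraticMap.polarBilin Q) v) z = 0 := by
    intro v
    rw [← ι_mul_sub_involute_mul_ι v z, sub_eq_zero]
    have := congrArg involute (hz v)
    rw [map_mul, map_mul, involute_ι, involute_involute] at this
    -- this : involute z * (-ι v) = (-ι v) * z
    rw [mul_neg, neg_mul, neg_inj] at this
    exact this.symm
  have hall : ∀ f : Module.Dual ℝ M, contractLeft (Q := Q) f z = 0 := by
    intro f
    obtain ⟨l, hl⟩ := exists_list_SP z
    obtain ⟨v, hv⟩ := exists_polar_eqOn hnd l f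
    rw [contract_eqOn (g := (QuadraticMap.polarBilin Q) v) ?_ hl]
    · exact hpol v
    · intro m hm
      rw [QuadraticMap.polarBilin_apply_apply]
      exact (hv m hm).symm
  obtain ⟨l, hl⟩ := exists_list_SP z
  clear hz hpol
  suffices H : ∀ (l : List M) (z : CliffordAlgebra Q),
      (∀ f : Module.Dual ℝ M, contractLeft (Q := Q) f z = 0) →
      z ∈ SP Q {m : M | m ∈ l} → ∃ r : ℝ, z = algebraMap ℝ _ r by
    exact H l z hall hl
  clear hall hl z
  intro l
  induction l with
  | nil =>
    intro z hall hl
    have hsub : SP Q {m : M | m ∈ ([] : List M)} ≤ Submodule.span ℝ {(1 : CliffordAlgebra Q)} := by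
      rw [SP, Submodule.span_le]
      rintro w ⟨l', hl', rfl⟩
      have : l' = [] := List.eq_nil_iff_forall_not_mem.2 fun m hm => by simpa using hl' m hm
      subst this
      simp only [List.map_nil, List.prod_nil]
      exact Submodule.mem_span_singleton_self 1
    obtain ⟨r, hr⟩ := Submodule.mem_span_singleton.mp (hsub hl)
    exact ⟨r, by rw [← hr, Algebra.algebraMap_eq_smul_one]⟩
  | cons e t ih =>
    intro z hall hl
    have hz' : z ∈ SP Q (insert e {m : M | m ∈ t}) := by
      refine SP_mono ?_ hl
      intro m hm
      simpa [List.mem_cons] using hm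
    obtain ⟨p, hp, q, hq, rfl⟩ := SP_insert hz'
    by_cases he : e ∈ Submodule.span ℝ {m : M | m ∈ t}
    · exact ih _ hall (Submodule.add_mem _ hp (ι_span_mul_mem he hq))
    · obtain ⟨f, hf0, hf1⟩ := exists_dual_of_not_mem he
      have hf0' : ∀ m ∈ {m : M | m ∈ t}, f m = 0 :=
        fun m hm => hf0 m (Submodule.subset_span hm)
      have h0 := hall f
      rw [map_add, contractLeft_ι_mul, contract_eq_zero hf0' hp,
        contract_eq_zero hf0' hq, hf1, one_smul, mul_zero, sub_zero, zero_add] at h0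
      subst h0
      rw [mul_zero, add_zero] at hall ⊢
      exact ih _ hall hp


section Group

/-- surjectivity of twisted conjugation, via the generation trick -/
theorem conj_surj [Nontrivial (CliffordAlgebra Q)]
    {g : CliffordAlgebra Q} (hu : IsUnit g) {μ : ℝ} (hμ : μ * μ = 1)
    (hc : ∀ x : M, ∃ y : M, g * ι Q x * Ring.inverse g = μ • ι Q y) :
    ∀ v : M, ∃ x : M, g * ι Q x * Ring.inverse g = μ • ι Q v := by
  classical
  have hgg : g * Ring.inverse g = 1 := Ring.mul_inverse_cancel g hu
  have hgg' : Ring.inverse g * g = 1 := Ring.inverse_mul_cancel g hu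
  set c : CliffordAlgebra Q →ₗ[ℝ] CliffordAlgebra Q :=
    μ • ((LinearMap.mulLeft ℝ g).comp (LinearMap.mulRight ℝ (Ring.inverse g))) with hc'
  have hcapp : ∀ z, c z = μ • (g * z * Ring.inverse g) := by
    intro z
    simp [hc', LinearMap.mulLeft_apply, LinearMap.mulRight_apply, mul_assoc]
  set K : Submodule ℝ (CliffordAlgebra Q) :=
    Submodule.map c (LinearMap.range (ι Q)) with hK
  set W : Submodule ℝ M := Submodule.comap (ι Q) K with hW
  have hallSP : ∀ z : CliffordAlgebra Q, z ∈ SP Q (W : Set M) := by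
    have key : ∀ w : CliffordAlgebra Q, c w ∈ SP Q (W : Set M) := by
      intro w
      induction w using CliffordAlgebra.induction with
      | algebraMap s =>
        have h9 : g * algebraMap ℝ (CliffordAlgebra Q) s * Ring.inverse g
            = algebraMap ℝ (CliffordAlgebra Q) s := by
          rw [← Algebra.commutes s g, mul_assoc, hgg, mul_one]
        rw [hcapp, h9, Algebra.smul_def, ← map_mul]
        exact algebraMap_mem_SP _ _
      | ι x =>
        obtain ⟨y, hy⟩ := hc x
        have h1 : c (ι Q x) = ι Q y := by
          rw [hcapp, hy, smul_smul, hμ, one_smul]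
        have h2 : ι Q y ∈ K := by
          rw [hK]
          exact Submodule.mem_map.mpr ⟨ι Q x, LinearMap.mem_range_self _ x, h1⟩
        rw [h1]
        exact ι_mem_SP (Submodule.mem_comap.mpr h2)
      | mul w1 w2 ih1 ih2 =>
        have h3 : c (w1 * w2) = μ • (c w1 * c w2) := by
          rw [hcapp, hcapp, hcapp]
          rw [smul_mul_smul_comm, hμ, one_smul]
          congr 1
          rw [show g * w1 * Ring.inverse g * (g * w2 * Ring.inverse g)
              = g * w1 * (Ring.inverse g * g) * (w2 * Ring.inverse g) from by noncomm_ring,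
            hgg', mul_one]
          noncomm_ring
        rw [h3]
        exact Submodule.smul_mem _ _ (mul_mem_SP ih1 ih2)
      | add w1 w2 ih1 ih2 => rw [map_add]; exact Submodule.add_mem _ ih1 ih2
    intro z
    have h4 : c (μ • (Ring.inverse g * z * g)) = z := by
      rw [map_smul, hcapp, smul_smul, hμ, one_smul]
      rw [show g * (Ring.inverse g * z * g) * Ring.inverse g
          = (g * Ring.inverse g) * z * (g * Ring.inverse g) from by noncomm_ring,
        hgg, one_mul, mul_one]
    rw [← h4]
    exact key _
  intro v
  have hvW : v ∈ W := by
    by_contra hv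
    obtain ⟨f, hf0, hf1⟩ := exists_dual_of_not_mem hv
    have h0 := contract_eq_zero (s := (W : Set M)) (fun m hm => hf0 m hm) (hallSP (ι Q v))
    rw [contractLeft_ι, hf1, map_one] at h0
    exact one_ne_zero h0
  have h5 : ι Q v ∈ K := Submodule.mem_comap.mp hvW
  rw [hK] at h5
  obtain ⟨w, hw, hcw⟩ := Submodule.mem_map.mp h5
  obtain ⟨x, rfl⟩ := hw
  refine ⟨x, ?_⟩
  rw [hcapp] at hcw
  rw [← hcw, smul_smul, hμ, one_smul]

/-- The inverse-side sandwich property of Lipschitz elements. -/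
theorem inv_sandwich [Nontrivial (CliffordAlgebra Q)]
    (hnd : ∀ w : M, (∀ u : M, QuadraticMap.polar Q w u = 0) → w = 0)
    {g : CliffordAlgebra Q} (hu : IsUnit g)
    (hconj : ∀ x : M, ∃ y : M, g * ι Q x * Ring.inverse (involute g) = ι Q y) :
    ∃ (r μ : ℝ), μ * μ = 1 ∧ involute g = μ • g ∧
      (∀ x : M, ∃ y : M, reverse (Q := Q) g * ι Q x * g = r • ι Q y) := by
  have hui : IsUnit (involute (Q := Q) g) := hu.map involute
  have hgg : g * Ring.inverse g = 1 := Ring.mul_inverse_cancel g hu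
  have hgg' : Ring.inverse g * g = 1 := Ring.inverse_mul_cancel g hu
  have hagag : involute (Q := Q) g * Ring.inverse (involute (Q := Q) g) = 1 :=
    Ring.mul_inverse_cancel _ hui
  have hagag' : Ring.inverse (involute (Q := Q) g) * involute (Q := Q) g = 1 :=
    Ring.inverse_mul_cancel _ hui
  have hboth : ∀ x : M, ∃ y : M,
      (g * ι Q x = ι Q y * involute g) ∧ (involute g * ι Q x = ι Q y * g) := by
    intro x
    obtain ⟨y, hy⟩ := hconj x
    have h1 : g * ι Q x = ι Q y * involute g := by
      have := congrArg (· * involute (Q := Q) g) hy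
      simpa [mul_assoc, hagag'] using this
    refine ⟨y, h1, ?_⟩
    have h2 := congrArg (involute (Q := Q)) h1
    rw [map_mul, map_mul, involute_ι, involute_ι, involute_involute] at h2
    rw [mul_neg, neg_mul, neg_inj] at h2
    exact h2
  have hNcen : ∀ v : M, (reverse (Q := Q) (involute g) * g) * ι Q v =
      ι Q v * involute (reverse (Q := Q) (involute g) * g) := by
    intro v
    obtain ⟨y, h1, _⟩ := hboth v
    have h2 : ι Q v * reverse (Q := Q) g = reverse (Q := Q) (involute g) * ι Q y := by
      have := congrArg (reverse (Q := Q)) h1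
      rw [reverse.map_mul, reverse.map_mul, reverse_ι, reverse_ι] at this
      exact this
    have h5 : reverse (Q := Q) (involute g) * g * ι Q v
        = ι Q v * (reverse (Q := Q) g * involute g) := by
      rw [mul_assoc, h1, ← mul_assoc, ← h2, mul_assoc]
    rw [h5]
    congr 1
    rw [map_mul, ← reverse_involute, involute_involute]
  obtain ⟨r, hr⟩ := scalar_of_alphaCentral hnd hNcen
  have hinv_ag : involute (Q := Q) (Ring.inverse (involute (Q := Q) g)) = Ring.inverse g := by
    have hb1 : involute (Q := Q) (Ring.inverse (involute (Q := Q) g)) * g = 1 := by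
      have := congrArg (involute (Q := Q)) hagag'
      rwa [map_mul, involute_involute, map_one] at this
    calc involute (Q := Q) (Ring.inverse (involute (Q := Q) g))
        = involute (Q := Q) (Ring.inverse (involute (Q := Q) g)) * (g * Ring.inverse g) := by
          rw [hgg, mul_one]
      _ = Ring.inverse g := by rw [← mul_assoc, hb1, one_mul]
  have hucen : ∀ v : M, (Ring.inverse (involute (Q := Q) g) * g) * ι Q v =
      ι Q v * involute (Ring.inverse (involute (Q := Q) g) * g) := by
    intro v
    obtain ⟨y, h1, h3⟩ := hboth v
    have hy : ι Q y = involute (Q := Q) g * ι Q v * Ring.inverse g := by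
      rw [h3, mul_assoc, hgg, mul_one]
    have e1 : Ring.inverse (involute (Q := Q) g)
          * (involute (Q := Q) g * ι Q v * Ring.inverse g * involute (Q := Q) g)
        = ι Q v * (Ring.inverse g * involute (Q := Q) g) := by
      rw [show Ring.inverse (involute (Q := Q) g)
            * (involute (Q := Q) g * ι Q v * Ring.inverse g * involute (Q := Q) g)
          = (Ring.inverse (involute (Q := Q) g) * involute (Q := Q) g)
            * (ι Q v * (Ring.inverse g * involute (Q := Q) g)) from by noncomm_ring,
        hagag', one_mul]
    rw [mul_assoc, h1, hy, e1, map_mul, hinv_ag]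
  obtain ⟨μ, hμ⟩ := scalar_of_alphaCentral hnd hucen
  have hg_eq : g = μ • involute (Q := Q) g := by
    have h6 : involute (Q := Q) g * (Ring.inverse (involute (Q := Q) g) * g) = g := by
      rw [← mul_assoc, hagag, one_mul]
    rw [hμ] at h6
    have h7 : μ • involute (Q := Q) g = g := by
      rw [Algebra.smul_def, Algebra.commutes]
      exact h6
    exact h7.symm
  have hinvol : involute (Q := Q) g = μ • g := by
    have := congrArg (involute (Q := Q)) hg_eq
    rwa [map_smul, involute_involute] at this
  have hμμ : μ * μ = 1 := by
    have h7 : g = (μ * μ) • g := by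
      calc g = μ • involute (Q := Q) g := hg_eq
        _ = μ • (μ • g) := by rw [hinvol]
        _ = (μ * μ) • g := by rw [smul_smul]
    have h8 : (1 - μ * μ) • g = 0 := by
      rw [sub_smul, one_smul, ← h7, sub_self]
    rcases smul_eq_zero.mp h8 with h | h
    · linarith
    · exact absurd h hu.ne_zero
  have hrevg_g : reverse (Q := Q) g * g = algebraMap ℝ _ (μ * r) := by
    have h9 : μ • (reverse (Q := Q) g * g) = algebraMap ℝ _ r := by
      rw [← smul_mul_assoc, ← map_smul, ← hinvol, hr]
    have h10 := congrArg (fun z => μ • z) h9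
    rw [smul_smul, hμμ, one_smul] at h10
    rw [h10, Algebra.smul_def, ← map_mul]
  have hc : ∀ x : M, ∃ y : M, g * ι Q x * Ring.inverse g = μ • ι Q y := by
    intro x
    obtain ⟨y, h1, _⟩ := hboth x
    refine ⟨y, ?_⟩
    rw [h1, hinvol, mul_smul_comm, smul_mul_assoc, mul_assoc, hgg, mul_one]
  have hsurj := conj_surj hu hμμ hc
  refine ⟨r, μ, hμμ, hinvol, fun x => ?_⟩
  obtain ⟨x', hx'⟩ := hsurj x
  refine ⟨x', ?_⟩
  have hιx : ι Q x = μ • (g * ι Q x' * Ring.inverse g) := by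
    rw [hx', smul_smul, hμμ, one_smul]
  have hinner : reverse (Q := Q) g * (g * ι Q x' * Ring.inverse g) * g
      = (μ * r) • ι Q x' := by
    rw [show reverse (Q := Q) g * (g * ι Q x' * Ring.inverse g) * g
        = (reverse (Q := Q) g * g) * ι Q x' * (Ring.inverse g * g) from by noncomm_ring,
      hgg', mul_one, hrevg_g, Algebra.smul_def]
  rw [hιx, mul_smul_comm, smul_mul_assoc, hinner, smul_smul, ← mul_assoc, hμμ, one_mul]

end Group


section MatHelpers

variable {A : Type*}

theorem fin_two_congr {a b c d a' b' c' d' : A} (h1 : a = a') (h2 : b = b')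
    (h3 : c = c') (h4 : d = d') : !![a, b; c, d] = !![a', b'; c', d'] := by
  rw [h1, h2, h3, h4]

theorem add_fin_two [AddCommMonoid A] (a b c d e f g h : A) :
    !![a,b;c,d] + !![e,f;g,h] = !![a+e, b+f; c+g, d+h] := by
  ext i j; fin_cases i <;> fin_cases j <;> simp

theorem neg_fin_two [AddCommGroup A] (a b c d : A) :
    -(!![a,b;c,d]) = !![-a,-b;-c,-d] := by
  ext i j; fin_cases i <;> fin_cases j <;> simp

theorem smul_fin_two' [AddCommMonoid A] [Module ℝ A] (r : ℝ) (a b c d : A) :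
    r • !![a,b;c,d] = !![r•a, r•b; r•c, r•d] := by
  ext i j; fin_cases i <;> fin_cases j <;> simp

end MatHelpers

section Transport

variable {V : Type*} [AddCommGroup V] [Module ℝ V] {Q : QuadraticForm ℝ V}

/-- Clifford conjugation on `Cl(-Q)`. -/
noncomputable def barC (z : CliffordAlgebra (-Q)) : CliffordAlgebra (-Q) :=
  reverse (involute z)

theorem barC_mul (x y : CliffordAlgebra (-Q)) : barC (x * y) = barC y * barC x := by
  simp [barC, map_mul, reverse.map_mul]

theorem barC_add (x y : CliffordAlgebra (-Q)) : barC (x + y) = barC x + barC y := by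
  simp [barC, map_add]

theorem barC_smul (r : ℝ) (x : CliffordAlgebra (-Q)) : barC (r • x) = r • barC x := by
  simp [barC, map_smul]

theorem barC_zero : barC (0 : CliffordAlgebra (-Q)) = 0 := by simp [barC]

theorem barC_neg (x : CliffordAlgebra (-Q)) : barC (-x) = -barC x := by simp [barC]

theorem barC_algebraMap (r : ℝ) :
    barC (algebraMap ℝ (CliffordAlgebra (-Q)) r) = algebraMap ℝ _ r := by
  simp [barC]

theorem barC_ι (v : V) : barC (ι (-Q) v) = -ι (-Q) v := by
  simp [barC, involute_ι, reverse_ι]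

/-- matrix-level reversal -/
noncomputable def Rmat (M : Matrix (Fin 2) (Fin 2) (CliffordAlgebra (-Q))) :
    Matrix (Fin 2) (Fin 2) (CliffordAlgebra (-Q)) :=
  !![barC (M 1 1), barC (M 0 1); barC (M 1 0), barC (M 0 0)]

/-- matrix-level grade involution -/
noncomputable def Pmat (M : Matrix (Fin 2) (Fin 2) (CliffordAlgebra (-Q))) :
    Matrix (Fin 2) (Fin 2) (CliffordAlgebra (-Q)) :=
  !![involute (M 0 0), -involute (M 0 1); -involute (M 1 0), involute (M 1 1)]

theorem Rmat_apply (a b c d : CliffordAlgebra (-Q)) :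
    Rmat !![a, b; c, d] = !![barC d, barC b; barC c, barC a] := rfl

theorem Pmat_apply (a b c d : CliffordAlgebra (-Q)) :
    Pmat !![a, b; c, d] = !![involute a, -involute b; -involute c, involute d] := rfl

theorem smul_fin_two (r : ℝ) (a b c d : CliffordAlgebra (-Q)) :
    r • !![a, b; c, d] = !![r • a, r • b; r • c, r • d] := by
  ext i j; fin_cases i <;> fin_cases j <;> simp

theorem algebraMap_fin_two (r : ℝ) :
    algebraMap ℝ (Matrix (Fin 2) (Fin 2) (CliffordAlgebra (-Q))) r
      = !![algebraMap ℝ _ r, 0; 0, algebraMap ℝ _ r] := by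
  ext i j; fin_cases i <;> fin_cases j <;> simp [Matrix.algebraMap_matrix_apply]

theorem fin_two_entries {a b c d a' b' c' d' : CliffordAlgebra (-Q)}
    (h : !![a, b; c, d] = !![a', b'; c', d']) : a = a' ∧ b = b' ∧ c = c' ∧ d = d' :=
  ⟨congrFun (congrFun h 0) 0, congrFun (congrFun h 0) 1,
   congrFun (congrFun h 1) 0, congrFun (congrFun h 1) 1⟩

theorem Rmat_mul (M N : Matrix (Fin 2) (Fin 2) (CliffordAlgebra (-Q))) :
    Rmat (M * N) = Rmat N * Rmat M := by
  rw [Matrix.eta_fin_two M, Matrix.eta_fin_two N, Matrix.mul_fin_two,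
    Rmat_apply, Rmat_apply, Rmat_apply, Matrix.mul_fin_two]
  exact fin_two_congr
    (by rw [barC_add, barC_mul, barC_mul, add_comm])
    (by rw [barC_add, barC_mul, barC_mul, add_comm])
    (by rw [barC_add, barC_mul, barC_mul, add_comm])
    (by rw [barC_add, barC_mul, barC_mul, add_comm])

theorem Pmat_mul (M N : Matrix (Fin 2) (Fin 2) (CliffordAlgebra (-Q))) :
    Pmat (M * N) = Pmat M * Pmat N := by
  rw [Matrix.eta_fin_two M, Matrix.eta_fin_two N, Matrix.mul_fin_two,
    Pmat_apply, Pmat_apply, Pmat_apply, Matrix.mul_fin_two]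
  exact fin_two_congr
    (by simp only [map_add, map_mul]; noncomm_ring)
    (by simp only [map_add, map_mul]; noncomm_ring)
    (by simp only [map_add, map_mul]; noncomm_ring)
    (by simp only [map_add, map_mul]; noncomm_ring)

theorem Rmat_add (M N : Matrix (Fin 2) (Fin 2) (CliffordAlgebra (-Q))) :
    Rmat (M + N) = Rmat M + Rmat N := by
  rw [Matrix.eta_fin_two M, Matrix.eta_fin_two N, add_fin_two,
    Rmat_apply, Rmat_apply, Rmat_apply, add_fin_two]
  exact fin_two_congr (barC_add _ _) (barC_add _ _) (barC_add _ _) (barC_add _ _)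

theorem Pmat_add (M N : Matrix (Fin 2) (Fin 2) (CliffordAlgebra (-Q))) :
    Pmat (M + N) = Pmat M + Pmat N := by
  rw [Matrix.eta_fin_two M, Matrix.eta_fin_two N, add_fin_two,
    Pmat_apply, Pmat_apply, Pmat_apply, add_fin_two]
  exact fin_two_congr (map_add _ _ _) (by rw [map_add, neg_add])
    (by rw [map_add, neg_add]) (map_add _ _ _)

theorem Rmat_algebraMap (r : ℝ) :
    Rmat (algebraMap ℝ (Matrix (Fin 2) (Fin 2) (CliffordAlgebra (-Q))) r)
      = algebraMap ℝ _ r := by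
  rw [algebraMap_fin_two, Rmat_apply, barC_algebraMap, barC_zero]

theorem Pmat_algebraMap (r : ℝ) :
    Pmat (algebraMap ℝ (Matrix (Fin 2) (Fin 2) (CliffordAlgebra (-Q))) r)
      = algebraMap ℝ _ r := by
  rw [algebraMap_fin_two, Pmat_apply]
  simp

theorem Rmat_jmat (x : V × ℝ × ℝ) : Rmat (jmat Q x) = jmat Q x := by
  show Rmat !![ι (-Q) x.1, algebraMap ℝ _ (x.2.1 - x.2.2);
      algebraMap ℝ _ (x.2.1 + x.2.2), -ι (-Q) x.1] = _
  rw [Rmat_apply, barC_neg, barC_ι, barC_algebraMap, barC_algebraMap, neg_neg]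
  rfl

theorem Pmat_jmat (x : V × ℝ × ℝ) : Pmat (jmat Q x) = -jmat Q x := by
  show Pmat !![ι (-Q) x.1, algebraMap ℝ _ (x.2.1 - x.2.2);
      algebraMap ℝ _ (x.2.1 + x.2.2), -ι (-Q) x.1] = _
  rw [Pmat_apply, involute_ι, map_neg, involute_ι, neg_neg]
  show _ = -!![ι (-Q) x.1, algebraMap ℝ _ (x.2.1 - x.2.2);
      algebraMap ℝ _ (x.2.1 + x.2.2), -ι (-Q) x.1]
  have hinv : involute (algebraMap ℝ (CliffordAlgebra (-Q)) (x.2.1 - x.2.2))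
      = algebraMap ℝ _ (x.2.1 - x.2.2) := by simp
  have hinv2 : involute (algebraMap ℝ (CliffordAlgebra (-Q)) (x.2.1 + x.2.2))
      = algebraMap ℝ _ (x.2.1 + x.2.2) := by simp
  rw [hinv, hinv2, neg_fin_two, neg_neg]

theorem smul_alg (r s : ℝ) :
    r • algebraMap ℝ (CliffordAlgebra (-Q)) s = algebraMap ℝ _ (r * s) := by
  rw [Algebra.smul_def, ← map_mul]

variable (F : CliffordAlgebra (negQhat Q) ≃ₐ[ℝ] Matrix (Fin 2) (Fin 2) (CliffordAlgebra (-Q)))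

theorem F_reverse (hF : ∀ x : V × ℝ × ℝ, F (ι (negQhat Q) x) = jmat Q x)
    (z : CliffordAlgebra (negQhat Q)) : F (reverse z) = Rmat (F z) := by
  induction z using CliffordAlgebra.induction with
  | algebraMap r => rw [reverse.commutes, AlgEquiv.commutes, Rmat_algebraMap]
  | ι x => rw [reverse_ι, hF, Rmat_jmat]
  | mul z1 z2 ih1 ih2 => rw [reverse.map_mul, map_mul, map_mul, ih1, ih2, Rmat_mul]
  | add z1 z2 ih1 ih2 => rw [map_add, map_add, map_add, ih1, ih2, Rmat_add]

theorem F_involute (hF : ∀ x : V × ℝ × ℝ, F (ι (negQhat Q) x) = jmat Q x)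
    (z : CliffordAlgebra (negQhat Q)) : F (involute z) = Pmat (F z) := by
  induction z using CliffordAlgebra.induction with
  | algebraMap r => rw [AlgHom.commutes, AlgEquiv.commutes, Pmat_algebraMap]
  | ι x => rw [involute_ι, map_neg, hF, Pmat_jmat]
  | mul z1 z2 ih1 ih2 => rw [map_mul, map_mul, map_mul, ih1, ih2, Pmat_mul]
  | add z1 z2 ih1 ih2 => rw [map_add, map_add, map_add, ih1, ih2, Pmat_add]

end Transport

end VahlenAux

/-- if `A = [[a,b],[c,d]]` is a Vahlen matrix then `ã a, b̃ b, c̃ c, d̃ d`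
are real scalars, and consequently `(x c~ + d~)(cx + d)` is a real scalar for every
`x ∈ V`. -/
theorem vahlen_entries_real (V : Type*) [AddCommGroup V] [Module ℝ V]
    (Q : QuadraticForm ℝ V)
    (hQnd : ∀ w : V, (∀ u : V, QuadraticMap.polar Q w u = 0) → w = 0)
    (F : CliffordAlgebra (negQhat Q) ≃ₐ[ℝ] Matrix (Fin 2) (Fin 2) (CliffordAlgebra (-Q)))
    (hF : ∀ x : V × ℝ × ℝ, F (ι (negQhat Q) x) = jmat Q x)
    (a b c d : CliffordAlgebra (-Q))
    (hA : IsVahlen Q F !![a, b; c, d]) :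
    (∃ r : ℝ, reverse a * a = algebraMap ℝ _ r) ∧
    (∃ r : ℝ, reverse b * b = algebraMap ℝ _ r) ∧
    (∃ r : ℝ, reverse c * c = algebraMap ℝ _ r) ∧
    (∃ r : ℝ, reverse d * d = algebraMap ℝ _ r) ∧
    (∀ x : V, ∃ r : ℝ,
      (ι (-Q) x * reverse c + reverse d) * (c * ι (-Q) x + d) = algebraMap ℝ _ r) := by
  classical
  open VahlenAux in
  obtain ⟨hu, hconj⟩ := hA
  rcases subsingleton_or_nontrivial (CliffordAlgebra (-Q)) with hss | hnt
  · exact ⟨⟨0, Subsingleton.elim _ _⟩, ⟨0, Subsingleton.elim _ _⟩, ⟨0, Subsingleton.elim _ _⟩,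
      ⟨0, Subsingleton.elim _ _⟩, fun x => ⟨0, Subsingleton.elim _ _⟩⟩
  haveI : Nontrivial (CliffordAlgebra (negQhat Q)) := F.toEquiv.nontrivial
  -- nondegeneracy of the polar form of `negQhat Q`
  have hkey : ∀ w u : V × ℝ × ℝ, QuadraticMap.polar (negQhat Q) w u =
      -(QuadraticMap.polar Q w.1 u.1) + (2 * w.2.1 * u.2.1 - 2 * w.2.2 * u.2.2) := by
    intro w u
    simp only [QuadraticMap.polar, negQhat, QuadraticMap.prod_apply, QuadraticMap.neg_apply,
      QuadraticMap.sq_apply, Prod.fst_add, Prod.snd_add]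
    ring
  have hnd : ∀ w : V × ℝ × ℝ,
      (∀ u : V × ℝ × ℝ, QuadraticMap.polar (negQhat Q) w u = 0) → w = 0 := by
    rintro ⟨w1, w2, w3⟩ hw
    have h1 : w1 = 0 := by
      apply hQnd
      intro u
      have := hw (u, 0, 0)
      rw [hkey] at this
      simpa using this
    have h2 : w2 = 0 := by
      have := hw (0, 1, 0)
      rw [hkey] at this
      simp only [QuadraticMap.polar_zero_right] at this
      linarith
    have h3 : w3 = 0 := by
      have := hw (0, 0, 1)
      rw [hkey] at this
      simp only [QuadraticMap.polar_zero_right] at this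
      linarith
    simp [h1, h2, h3, Prod.ext_iff]
  -- the main sandwich machinery
  obtain ⟨r, μ, hμμ, hinvol, hinv⟩ := VahlenAux.inv_sandwich hnd hu hconj
  have hFg : F (F.symm !![a, b; c, d]) = !![a, b; c, d] := F.apply_symm_apply _
  -- entry parities
  have hP : VahlenAux.Pmat !![a, b; c, d] = μ • !![a, b; c, d] := by
    rw [← hFg, ← VahlenAux.F_involute F hF, hinvol, map_smul, hFg]
  rw [VahlenAux.Pmat_apply, VahlenAux.smul_fin_two'] at hP
  obtain ⟨hPa, hPb, hPc, hPd⟩ := VahlenAux.fin_two_entries hP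
  have hbara : VahlenAux.barC a = μ • reverse a := by
    rw [VahlenAux.barC, hPa, map_smul]
  have hbard : VahlenAux.barC d = μ • reverse d := by
    rw [VahlenAux.barC, hPd, map_smul]
  have hib : involute b = -(μ • b) := by rw [← hPb, neg_neg]
  have hic : involute c = -(μ • c) := by rw [← hPc, neg_neg]
  have hbarb : VahlenAux.barC b = -(μ • reverse b) := by
    rw [VahlenAux.barC, hib, map_neg, map_smul]
  have hbarc : VahlenAux.barC c = -(μ • reverse c) := by
    rw [VahlenAux.barC, hic, map_neg, map_smul]
  -- matrix form of the inverse sandwich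
  have master : ∀ x : V × ℝ × ℝ, ∃ y : V × ℝ × ℝ,
      VahlenAux.Rmat !![a, b; c, d] * jmat Q x * !![a, b; c, d] = r • jmat Q y := by
    intro x
    obtain ⟨y, hy⟩ := hinv x
    refine ⟨y, ?_⟩
    have h := congrArg F hy
    rw [map_mul, map_mul, map_smul, VahlenAux.F_reverse F hF, hFg, hF, hF] at h
    exact h
  -- helper to undo a μ-smul
  have hμcancel : ∀ z w : CliffordAlgebra (-Q), μ • z = w → z = μ • w := by
    intro z w h
    rw [← h, smul_smul, hμμ, one_smul]
  -- instantiate at n₀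
  have hjm0 : jmat Q ((0 : V), (1/2 : ℝ), (1/2 : ℝ))
      = !![(0 : CliffordAlgebra (-Q)), 0; 1, 0] := by
    unfold jmat
    norm_num
  obtain ⟨y0, hy0⟩ := master ((0 : V), 1/2, 1/2)
  rw [hjm0, VahlenAux.Rmat_apply, Matrix.mul_fin_two, Matrix.mul_fin_two] at hy0
  simp only [mul_zero, zero_mul, mul_one, add_zero, zero_add] at hy0
  rw [show jmat Q y0 = !![ι (-Q) y0.1, algebraMap ℝ _ (y0.2.1 - y0.2.2);
      algebraMap ℝ _ (y0.2.1 + y0.2.2), -ι (-Q) y0.1] from rfl,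
    VahlenAux.smul_fin_two'] at hy0
  obtain ⟨hE1, hE2, hE3, hE4⟩ := VahlenAux.fin_two_entries hy0
  -- instantiate at n∞
  have hjmInf : jmat Q ((0 : V), (1/2 : ℝ), (-1/2 : ℝ))
      = !![(0 : CliffordAlgebra (-Q)), 1; 0, 0] := by
    unfold jmat
    norm_num
  obtain ⟨y1, hy1⟩ := master ((0 : V), 1/2, -1/2)
  rw [hjmInf, VahlenAux.Rmat_apply, Matrix.mul_fin_two, Matrix.mul_fin_two] at hy1
  simp only [mul_zero, zero_mul, mul_one, add_zero, zero_add] at hy1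
  rw [show jmat Q y1 = !![ι (-Q) y1.1, algebraMap ℝ _ (y1.2.1 - y1.2.2);
      algebraMap ℝ _ (y1.2.1 + y1.2.2), -ι (-Q) y1.1] from rfl,
    VahlenAux.smul_fin_two'] at hy1
  obtain ⟨hE1', hE2', hE3', hE4'⟩ := VahlenAux.fin_two_entries hy1
  -- G1 : reverse a * a
  have hG1 : reverse a * a = algebraMap ℝ _ (μ * (r * (y0.2.1 + y0.2.2))) := by
    rw [hbara, smul_mul_assoc] at hE3
    have h := hμcancel _ _ hE3
    rw [h, VahlenAux.smul_alg, VahlenAux.smul_alg]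
  -- G2 : reverse b * b
  have hG2 : reverse b * b = algebraMap ℝ _ (-(μ * (r * (y0.2.1 - y0.2.2)))) := by
    rw [hbarb, neg_mul, smul_mul_assoc, neg_eq_iff_eq_neg] at hE2
    have h := hμcancel _ _ hE2
    rw [h, VahlenAux.smul_alg, ← map_neg, VahlenAux.smul_alg]
    congr 1
    ring
  -- G3 : reverse c * c
  have hG3 : reverse c * c = algebraMap ℝ _ (-(μ * (r * (y1.2.1 + y1.2.2)))) := by
    rw [hbarc, neg_mul, smul_mul_assoc, neg_eq_iff_eq_neg] at hE3'
    have h := hμcancel _ _ hE3'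
    rw [h, VahlenAux.smul_alg, ← map_neg, VahlenAux.smul_alg]
    congr 1
    ring
  -- G4 : reverse d * d
  have hG4 : reverse d * d = algebraMap ℝ _ (μ * (r * (y1.2.1 - y1.2.2))) := by
    rw [hbard, smul_mul_assoc] at hE2'
    have h := hμcancel _ _ hE2'
    rw [h, VahlenAux.smul_alg, VahlenAux.smul_alg]
  -- the vector cross term
  have hdc : reverse d * c = (μ * r) • ι (-Q) y1.1 := by
    rw [hbard, smul_mul_assoc] at hE1'
    have h := hμcancel _ _ hE1'
    rw [h, smul_smul]
  have hcd : reverse c * d = (μ * r) • ι (-Q) y1.1 := by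
    have h := congrArg (reverse (Q := -Q)) hdc
    rw [reverse.map_mul, reverse_reverse, map_smul, reverse_ι] at h
    exact h
  refine ⟨⟨_, hG1⟩, ⟨_, hG2⟩, ⟨_, hG3⟩, ⟨_, hG4⟩, ?_⟩
  -- G5
  intro x
  refine ⟨(-(μ * (r * (y1.2.1 + y1.2.2)))) * ((-Q) x)
      + (μ * r) * QuadraticMap.polar (-Q) x y1.1
      + (μ * (r * (y1.2.1 - y1.2.2))), ?_⟩
  have expand : (ι (-Q) x * reverse c + reverse d) * (c * ι (-Q) x + d)
      = ι (-Q) x * (reverse c * c) * ι (-Q) x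
        + (ι (-Q) x * (reverse c * d) + (reverse d * c) * ι (-Q) x)
        + reverse d * d := by
    noncomm_ring
  rw [expand, hG3, hG4, hcd, hdc]
  have t1 : ι (-Q) x * algebraMap ℝ _ (-(μ * (r * (y1.2.1 + y1.2.2)))) * ι (-Q) x
      = algebraMap ℝ _ ((-(μ * (r * (y1.2.1 + y1.2.2)))) * ((-Q) x)) := by
    rw [← Algebra.commutes, mul_assoc, ι_sq_scalar, ← map_mul]
  have t2 : ι (-Q) x * ((μ * r) • ι (-Q) y1.1) + ((μ * r) • ι (-Q) y1.1) * ι (-Q) x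
      = algebraMap ℝ _ ((μ * r) * QuadraticMap.polar (-Q) x y1.1) := by
    rw [mul_smul_comm, smul_mul_assoc, ← smul_add, ι_mul_ι_add_swap, VahlenAux.smul_alg]
  rw [t1, t2, ← map_add, ← map_add]
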